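/- For every x ∈ ℝ, the quantity of data over x satisfies R^{(n)}_x = Y^{(n)}_x − I^{(n)}_x. -/

import Mathlib

open MeasureTheory
open scoped Classical

/-- The covering `C^(n)` obtained after storing the first `n` files
`(x_0, l_0), …, (x_{n-1}, l_{n-1})`: `C^(0) = ∅` and
`C^(k+1) = C^(k) ∪ [x_k, y_k)` where `y_k` is the infimum of the `y ≥ x_k`
such that the free space `(C^(k))ᶜ ∩ [x_k, y)` has Lebesgue measure `l_k`. -/
noncomputable def cover (x l : ℕ → ℝ) : ℕ → Set ℝ
  | 0 => ∅
  | k + 1 =>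
      cover x l k ∪
        Set.Ico (x k)
          (sInf {y : ℝ | x k ≤ y ∧
            volume ((cover x l k)ᶜ ∩ Set.Ico (x k) y) = ENNReal.ofReal (l k)})

/-- `g_x(R) = sup{ y ≤ x : y ∈ R }`. -/
noncomputable def gpt (R : Set ℝ) (x : ℝ) : ℝ := sSup {y : ℝ | y ≤ x ∧ y ∈ R}

/-- The process `Y^(n)` : `Y^(n)_0 = 0` and
`Y^(n)_b - Y^(n)_a = Σ_{i < n, x_i ∈ (a,b]} l_i - (b-a)` for `a < b`. -/
noncomputable def Yn (x l : ℕ → ℝ) (n : ℕ) (b : ℝ) : ℝ :=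
  (∑ i ∈ Finset.range n, if 0 < x i ∧ x i ≤ b then l i else 0)
    - (∑ i ∈ Finset.range n, if b < x i ∧ x i ≤ 0 then l i else 0) - b

/-- The quantity of data over `z` when the first `n` files are stored:
`R^(n)_z = Σ_{i < n, x_i ∈ [g_z(R^(n)), z]} l_i - (z - g_z(R^(n)))`, where
`R^(n)` is the complement (free space) of `C^(n)`. -/
noncomputable def Rq (x l : ℕ → ℝ) (n : ℕ) (z : ℝ) : ℝ :=
  (∑ i ∈ Finset.range n,
      if gpt ((cover x l n)ᶜ) z ≤ x i ∧ x i ≤ z then l i else 0)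
    - (z - gpt ((cover x l n)ᶜ) z)

open Set

set_option linter.unusedSectionVars false

namespace SP

noncomputable def II (x l : ℕ → ℝ) (k : ℕ) (z : ℝ) : ℝ := sInf (Yn x l k '' Set.Iic z)

lemma Yn_shift (x l : ℕ → ℝ) (k : ℕ) {a b : ℝ} (hab : a ≤ b) :
    Yn x l k b = Yn x l k a + (∑ i ∈ Finset.range k, if a < x i ∧ x i ≤ b then l i else 0) - (b - a) := by
  unfold Yn
  have : (∑ i ∈ Finset.range k, if a < x i ∧ x i ≤ b then l i else 0)
      = (∑ i ∈ Finset.range k, ((if 0 < x i ∧ x i ≤ b then l i else 0)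
          - (if 0 < x i ∧ x i ≤ a then l i else 0)
          - (if b < x i ∧ x i ≤ 0 then l i else 0)
          + (if a < x i ∧ x i ≤ 0 then l i else 0))) := by
    apply Finset.sum_congr rfl
    intro i _
    rcases le_or_gt (x i) a with h2|h2 <;> rcases le_or_gt (x i) b with h3|h3 <;>
      rcases le_or_gt (x i) 0 with h4|h4 <;> split_ifs <;> simp_all <;> linarith
  rw [this]
  simp [Finset.sum_add_distrib, Finset.sum_sub_distrib]
  ring

lemma sum_ind_nonneg (l : ℕ → ℝ) (hl : ∀ i, 0 < l i) (k : ℕ) (p : ℕ → Prop) [DecidablePred p] :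
    0 ≤ ∑ i ∈ Finset.range k, if p i then l i else 0 := by
  apply Finset.sum_nonneg
  intro i _
  split_ifs
  · exact (hl i).le
  · exact le_refl 0

lemma sum_ind_le (l : ℕ → ℝ) (hl : ∀ i, 0 < l i) (k : ℕ) (p : ℕ → Prop) [DecidablePred p] :
    (∑ i ∈ Finset.range k, if p i then l i else 0) ≤ ∑ i ∈ Finset.range k, l i := by
  apply Finset.sum_le_sum
  intro i _
  split_ifs
  · exact le_refl (l i)
  · exact (hl i).le

lemma Yn_lb (x l : ℕ → ℝ) (hl : ∀ i, 0 < l i) (k : ℕ) (y : ℝ) :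
    -(∑ i ∈ Finset.range k, l i) - y ≤ Yn x l k y := by
  unfold Yn
  have h1 : 0 ≤ ∑ i ∈ Finset.range k, if 0 < x i ∧ x i ≤ y then l i else 0 :=
    sum_ind_nonneg l hl k _
  have h2 : (∑ i ∈ Finset.range k, if y < x i ∧ x i ≤ 0 then l i else 0) ≤ ∑ i ∈ Finset.range k, l i :=
    sum_ind_le l hl k _
  linarith

lemma Yn_mono (x l : ℕ → ℝ) (hl : ∀ i, 0 < l i) (k : ℕ) {a b : ℝ} (hab : a ≤ b) :
    Yn x l k a - (b - a) ≤ Yn x l k b := by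
  rw [Yn_shift x l k hab]
  have h1 : 0 ≤ ∑ i ∈ Finset.range k, if a < x i ∧ x i ≤ b then l i else 0 :=
    sum_ind_nonneg l hl k _
  linarith

end SP

namespace SP

lemma Yn_image_ne (x l : ℕ → ℝ) (k : ℕ) (z : ℝ) : (Yn x l k '' Set.Iic z).Nonempty :=
  ⟨Yn x l k z, ⟨z, le_refl z, rfl⟩⟩

lemma bddBelow_Yn (x l : ℕ → ℝ) (hl : ∀ i, 0 < l i) (k : ℕ) (z : ℝ) :
    BddBelow (Yn x l k '' Set.Iic z) := by
  refine ⟨-(∑ i ∈ Finset.range k, l i) - z, ?_⟩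
  rintro w ⟨y, hy, rfl⟩
  have := Yn_lb x l hl k y
  have : -(∑ i ∈ Finset.range k, l i) - z ≤ -(∑ i ∈ Finset.range k, l i) - y := by
    simp only [Set.mem_Iic] at hy; linarith
  have := Yn_lb x l hl k y
  linarith

lemma II_le (x l : ℕ → ℝ) (hl : ∀ i, 0 < l i) (k : ℕ) {y z : ℝ} (h : y ≤ z) :
    II x l k z ≤ Yn x l k y :=
  csInf_le (bddBelow_Yn x l hl k z) ⟨y, h, rfl⟩

lemma II_le_self (x l : ℕ → ℝ) (hl : ∀ i, 0 < l i) (k : ℕ) (z : ℝ) :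
    II x l k z ≤ Yn x l k z := II_le x l hl k (le_refl z)

lemma II_anti (x l : ℕ → ℝ) (hl : ∀ i, 0 < l i) (k : ℕ) {z z' : ℝ} (h : z ≤ z') :
    II x l k z' ≤ II x l k z :=
  csInf_le_csInf (bddBelow_Yn x l hl k z') (Yn_image_ne x l k z)
    (Set.image_mono (Set.Iic_subset_Iic.mpr h))

lemma II_lip (x l : ℕ → ℝ) (hl : ∀ i, 0 < l i) (k : ℕ) {z z' : ℝ} (h : z ≤ z') :
    II x l k z - (z' - z) ≤ II x l k z' := by
  apply le_csInf (Yn_image_ne x l k z')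
  rintro w ⟨y, hy, rfl⟩
  simp only [Set.mem_Iic] at hy
  rcases le_or_gt y z with h1 | h1
  · have := II_le x l hl k h1
    linarith
  · have h2 := Yn_mono x l hl k h1.le
    have h3 := II_le x l hl k (le_refl z)
    linarith

lemma II_cont (x l : ℕ → ℝ) (hl : ∀ i, 0 < l i) (k : ℕ) : Continuous (II x l k) := by
  apply LipschitzWith.continuous (K := 1)
  apply LipschitzWith.of_dist_le_mul
  intro a b
  rw [Real.dist_eq, Real.dist_eq, NNReal.coe_one, one_mul]
  rcases le_total a b with h | h
  · have h1 := II_anti x l hl k h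
    have h2 := II_lip x l hl k h
    rw [abs_of_nonneg (by linarith), abs_of_nonpos (by linarith)]
    linarith
  · have h1 := II_anti x l hl k h
    have h2 := II_lip x l hl k h
    rw [abs_of_nonpos (by linarith), abs_of_nonneg (by linarith)]
    linarith

end SP

namespace SP

lemma sInf_add_const (S : Set ℝ) (hne : S.Nonempty) (hbd : BddBelow S) (c : ℝ) :
    sInf ((fun r => r + c) '' S) = sInf S + c := by
  obtain ⟨b, hb⟩ := hbd
  apply le_antisymm
  · have h1 : ∀ r ∈ S, sInf ((fun r => r + c) '' S) - c ≤ r := by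
      intro r hr
      have : sInf ((fun r => r + c) '' S) ≤ r + c := by
        refine csInf_le ⟨b + c, ?_⟩ ⟨r, hr, rfl⟩
        rintro w ⟨s, hs, rfl⟩
        have := hb hs
        simpa using this
      linarith
    have := le_csInf hne h1
    linarith
  · apply le_csInf (hne.image _)
    rintro w ⟨s, hs, rfl⟩
    have : sInf S ≤ s := csInf_le ⟨b, hb⟩ hs
    simpa using this

lemma bddBelow_Yn_subset (x l : ℕ → ℝ) (hl : ∀ i, 0 < l i) (k : ℕ) {s : Set ℝ} {z : ℝ}
    (h : s ⊆ Set.Iic z) : BddBelow (Yn x l k '' s) :=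
  (bddBelow_Yn x l hl k z).mono (Set.image_mono h)

lemma sInf_Iio_eq (x l : ℕ → ℝ) (hl : ∀ i, 0 < l i) (k : ℕ) (w : ℝ) :
    sInf (Yn x l k '' Set.Iio w) = II x l k w := by
  have hiic : Set.Iic w = Set.Iio w ∪ {w} := by
    rw [Set.Iio_union_right]
  have hne : (Yn x l k '' Set.Iio w).Nonempty := ⟨Yn x l k (w - 1), ⟨w - 1, by simp, rfl⟩⟩
  have hbd : BddBelow (Yn x l k '' Set.Iio w) :=
    bddBelow_Yn_subset x l hl k Set.Iio_subset_Iic_self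
  have hle : sInf (Yn x l k '' Set.Iio w) ≤ Yn x l k w := by
    apply le_of_forall_pos_le_add
    intro ε hε
    have h1 : sInf (Yn x l k '' Set.Iio w) ≤ Yn x l k (w - ε) :=
      csInf_le hbd ⟨w - ε, by simp [hε], rfl⟩
    have h2 := Yn_mono x l hl k (show w - ε ≤ w by linarith)
    linarith
  have : II x l k w = min (sInf (Yn x l k '' Set.Iio w)) (Yn x l k w) := by
    unfold II
    rw [hiic, Set.image_union, Set.image_singleton,
      csInf_union hbd hne (bddBelow_singleton) (Set.singleton_nonempty _), csInf_singleton]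
  rw [this, min_eq_left hle]

lemma Iio_union_Icc {w z : ℝ} (h : w ≤ z) : Set.Iic z = Set.Iio w ∪ Set.Icc w z := by
  ext y
  simp only [Set.mem_Iic, Set.mem_union, Set.mem_Iio, Set.mem_Icc]
  constructor
  · intro hy
    rcases lt_or_ge y w with h1 | h1
    · exact Or.inl h1
    · exact Or.inr ⟨h1, hy⟩
  · rintro (h1 | ⟨h1, h2⟩)
    · linarith
    · exact h2

lemma II_split (x l : ℕ → ℝ) (hl : ∀ i, 0 < l i) (k : ℕ) {w z : ℝ} (h : w ≤ z) :
    II x l k z = min (II x l k w) (sInf (Yn x l k '' Set.Icc w z)) := by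
  have hbd1 : BddBelow (Yn x l k '' Set.Iio w) :=
    bddBelow_Yn_subset x l hl k (fun y hy => le_trans (le_of_lt hy) h)
  have hbd2 : BddBelow (Yn x l k '' Set.Icc w z) :=
    bddBelow_Yn_subset x l hl k (fun y hy => hy.2)
  have hne1 : (Yn x l k '' Set.Iio w).Nonempty := ⟨Yn x l k (w - 1), ⟨w - 1, by simp, rfl⟩⟩
  have hne2 : (Yn x l k '' Set.Icc w z).Nonempty := ⟨Yn x l k w, ⟨w, by simp [h], rfl⟩⟩
  have : II x l k z = sInf (Yn x l k '' Set.Iio w ∪ Yn x l k '' Set.Icc w z) := by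
    unfold II
    rw [Iio_union_Icc h, Set.image_union]
  rw [this, csInf_union hbd1 hne1 hbd2 hne2, sInf_Iio_eq x l hl k w]

lemma II_le_Icc (x l : ℕ → ℝ) (hl : ∀ i, 0 < l i) (k : ℕ) {w z : ℝ} (h : w ≤ z) :
    II x l k z ≤ sInf (Yn x l k '' Set.Icc w z) := by
  refine le_csInf ⟨Yn x l k w, ⟨w, by simp [h], rfl⟩⟩ ?_
  rintro b ⟨y, hy, rfl⟩
  exact II_le x l hl k hy.2

lemma Yn_succ (x l : ℕ → ℝ) (k : ℕ) (z : ℝ) :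
    Yn x l (k + 1) z = Yn x l k z + (if x k ≤ z then l k else 0) - (if x k ≤ 0 then l k else 0) := by
  unfold Yn
  rw [Finset.sum_range_succ, Finset.sum_range_succ]
  rcases le_or_gt (x k) z with h1 | h1 <;> rcases le_or_gt (x k) 0 with h2 | h2 <;>
    split_ifs <;> simp_all <;> linarith

end SP

namespace SP

noncomputable def cc (x l : ℕ → ℝ) (k : ℕ) : ℝ := if x k ≤ 0 then l k else 0

lemma bddBelow_add_const (S : Set ℝ) (hbd : BddBelow S) (c : ℝ) :
    BddBelow ((fun r => r + c) '' S) := by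
  obtain ⟨b, hb⟩ := hbd
  refine ⟨b + c, ?_⟩
  rintro w ⟨s, hs, rfl⟩
  have := hb hs
  simpa using this

lemma Yn_succ_lt (x l : ℕ → ℝ) (k : ℕ) {z : ℝ} (hz : z < x k) :
    Yn x l (k + 1) z = Yn x l k z + -cc x l k := by
  rw [Yn_succ, if_neg (by linarith), cc]; ring

lemma Yn_succ_ge (x l : ℕ → ℝ) (k : ℕ) {z : ℝ} (hz : x k ≤ z) :
    Yn x l (k + 1) z = Yn x l k z + (l k - cc x l k) := by
  rw [Yn_succ, if_pos hz, cc]; ring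

lemma II_succ_lt (x l : ℕ → ℝ) (hl : ∀ i, 0 < l i) (k : ℕ) {z : ℝ} (hz : z < x k) :
    II x l (k + 1) z = II x l k z - cc x l k := by
  have himg : Yn x l (k + 1) '' Set.Iic z = (fun r => r + -cc x l k) '' (Yn x l k '' Set.Iic z) := by
    rw [← Set.image_comp]
    apply Set.image_congr
    intro y hy
    simp only [Set.mem_Iic] at hy
    exact Yn_succ_lt x l k (lt_of_le_of_lt hy hz)
  show sInf _ = _
  rw [himg, sInf_add_const _ (Yn_image_ne x l k z) (bddBelow_Yn x l hl k z)]
  show II x l k z + -cc x l k = _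
  ring

lemma II_succ_ge (x l : ℕ → ℝ) (hl : ∀ i, 0 < l i) (k : ℕ) {z : ℝ} (hz : x k ≤ z) :
    II x l (k + 1) z
      = min (II x l k (x k)) (sInf (Yn x l k '' Set.Icc (x k) z) + l k) - cc x l k := by
  have hbd1 : BddBelow (Yn x l k '' Set.Iio (x k)) :=
    bddBelow_Yn_subset x l hl k (fun y hy => le_trans (le_of_lt hy) hz)
  have hbd2 : BddBelow (Yn x l k '' Set.Icc (x k) z) :=
    bddBelow_Yn_subset x l hl k (fun y hy => hy.2)
  have hne1 : (Yn x l k '' Set.Iio (x k)).Nonempty :=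
    ⟨Yn x l k (x k - 1), ⟨x k - 1, by simp, rfl⟩⟩
  have hne2 : (Yn x l k '' Set.Icc (x k) z).Nonempty := ⟨Yn x l k (x k), ⟨x k, by simp [hz], rfl⟩⟩
  have h1 : Yn x l (k + 1) '' Set.Iio (x k)
      = (fun r => r + -cc x l k) '' (Yn x l k '' Set.Iio (x k)) := by
    rw [← Set.image_comp]
    apply Set.image_congr
    intro y hy
    exact Yn_succ_lt x l k hy
  have h2 : Yn x l (k + 1) '' Set.Icc (x k) z
      = (fun r => r + (l k - cc x l k)) '' (Yn x l k '' Set.Icc (x k) z) := by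
    rw [← Set.image_comp]
    apply Set.image_congr
    intro y hy
    exact Yn_succ_ge x l k hy.1
  show sInf _ = _
  rw [Iio_union_Icc hz, Set.image_union, h1, h2,
    csInf_union (bddBelow_add_const _ hbd1 _) (hne1.image _)
      (bddBelow_add_const _ hbd2 _) (hne2.image _)]
  rw [sInf_add_const _ hne1 hbd1, sInf_add_const _ hne2 hbd2, sInf_Iio_eq x l hl k]
  rcases le_total (II x l k (x k)) (sInf (Yn x l k '' Set.Icc (x k) z) + l k) with h | h
  · rw [min_eq_left h, min_eq_left (by linarith)]
    ring
  · rw [min_eq_right h, min_eq_right (by linarith)]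
    ring

end SP

namespace SP

section ABC
variable (x l : ℕ → ℝ) (hl : ∀ i, 0 < l i) (k : ℕ) (t : ℝ)
  (ht1 : x k ≤ t)
  (ht2 : II x l k t = II x l k (x k) - l k)
  (hmin : ∀ y, x k ≤ y → y < t → II x l k (x k) - l k < II x l k y)

include hl

lemma claimA {z : ℝ} (hz : z ≤ x k) : II x l (k + 1) z = II x l k z - cc x l k := by
  rcases lt_or_eq_of_le hz with h | h
  · exact II_succ_lt x l hl k h
  · rw [h]
    rw [II_succ_ge x l hl k (le_refl (x k))]
    rw [Set.Icc_self, Set.image_singleton, csInf_singleton]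
    have h1 : II x l k (x k) ≤ Yn x l k (x k) + l k :=
      le_trans (II_le_self x l hl k (x k)) (by linarith [(hl k)])
    rw [min_eq_left h1]

include ht1 ht2

lemma claimB {z : ℝ} (hz1 : x k ≤ z) (hz2 : z ≤ t) :
    II x l (k + 1) z = II x l k (x k) - cc x l k := by
  rw [II_succ_ge x l hl k hz1]
  have h1 : II x l k z ≤ sInf (Yn x l k '' Set.Icc (x k) z) := II_le_Icc x l hl k hz1
  have h2 : II x l k t ≤ II x l k z := II_anti x l hl k hz2
  rw [min_eq_left (by linarith)]

lemma claimC {z : ℝ} (hz : t ≤ z) :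
    II x l (k + 1) z = II x l k z + l k - cc x l k := by
  have hXz : x k ≤ z := le_trans ht1 hz
  rw [II_succ_ge x l hl k hXz]
  have hsplit := II_split x l hl k hXz
  have hIzIt : II x l k z ≤ II x l k t := II_anti x l hl k hz
  have hlt : II x l k z < II x l k (x k) := by linarith [(hl k)]
  have hmm : II x l k z = sInf (Yn x l k '' Set.Icc (x k) z) := by
    rcases le_total (II x l k (x k)) (sInf (Yn x l k '' Set.Icc (x k) z)) with h | h
    · rw [min_eq_left h] at hsplit; linarith
    · rw [min_eq_right h] at hsplit; exact hsplit
  rw [← hmm, min_eq_right (by linarith)]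

include hmin

lemma claimM (z : ℝ) :
    Yn x l (k + 1) z ≤ II x l (k + 1) z ↔
      (Yn x l k z ≤ II x l k z ∧ z ∉ Set.Ico (x k) t) := by
  rcases lt_or_ge z (x k) with h | h
  · rw [Yn_succ_lt x l k h, II_succ_lt x l hl k h]
    constructor
    · intro hy
      refine ⟨by linarith, ?_⟩
      intro hmem
      exact absurd hmem.1 (not_le.mpr h)
    · intro ⟨hy, _⟩
      linarith
  · rcases lt_or_ge z t with h2 | h2
    · rw [Yn_succ_ge x l k h, claimB x l hl k t ht1 ht2 h h2.le]
      constructor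
      · intro hy
        exfalso
        have h3 : II x l k z ≤ Yn x l k z := II_le_self x l hl k z
        have h4 := hmin z h h2
        simp only [cc] at hy ⊢
        split_ifs at hy <;> linarith
      · intro ⟨_, hy⟩
        exact absurd ⟨h, h2⟩ hy
    · rw [Yn_succ_ge x l k h, claimC x l hl k t ht1 ht2 h2]
      constructor
      · intro hy
        refine ⟨by linarith, ?_⟩
        intro hmem
        linarith [hmem.2]
      · intro ⟨hy, _⟩
        linarith

end ABC
end SP

namespace SP

lemma cover_measurable (x l : ℕ → ℝ) (k : ℕ) : MeasurableSet (cover x l k) := by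
  induction k with
  | zero => exact MeasurableSet.empty
  | succ k ih => exact ih.union measurableSet_Ico

lemma vol_congr_pair {S T : Set ℝ} {p q : ℝ} (h1 : S \ T ⊆ {p, q}) (h2 : T \ S ⊆ {p, q}) :
    volume S = volume T := by
  have hz : volume ({p, q} : Set ℝ) = 0 := ((Set.finite_singleton q).insert p).measure_zero _
  exact measure_congr (MeasureTheory.ae_eq_set.mpr
    ⟨measure_mono_null h1 hz, measure_mono_null h2 hz⟩)

lemma vol_split (S : Set ℝ) (hS : MeasurableSet S) {a m b : ℝ} (h1 : a ≤ m) (h2 : m ≤ b) :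
    volume (S ∩ Set.Ioc a b) = volume (S ∩ Set.Ioc a m) + volume (S ∩ Set.Ioc m b) := by
  have hunion : S ∩ Set.Ioc a b = (S ∩ Set.Ioc a m) ∪ (S ∩ Set.Ioc m b) := by
    rw [← Set.inter_union_distrib_left, Set.Ioc_union_Ioc_eq_Ioc h1 h2]
  have hdisj : Disjoint (S ∩ Set.Ioc a m) (S ∩ Set.Ioc m b) := by
    apply Set.disjoint_left.mpr
    rintro w ⟨_, hw1⟩ ⟨_, hw2⟩
    exact absurd hw2.1 (not_lt.mpr hw1.2)
  rw [hunion, measure_union hdisj (hS.inter measurableSet_Ioc)]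

end SP

namespace SP
section LOC
variable (x l : ℕ → ℝ) (hl : ∀ i, 0 < l i) (k : ℕ) (t : ℝ)
  (ht1 : x k ≤ t)
  (ht2 : II x l k t = II x l k (x k) - l k)
  (hmin : ∀ y, x k ≤ y → y < t → II x l k (x k) - l k < II x l k y)
  (hcov : ∀ a b, a ≤ b →
    volume ((cover x l k)ᶜ ∩ Set.Ioc a b) = ENNReal.ofReal (II x l k a - II x l k b))

include hl ht1 ht2 hcov

lemma loc1 {a b : ℝ} (hab : a ≤ b) (hbX : b ≤ x k) :
    volume ((cover x l k ∪ Set.Ico (x k) t)ᶜ ∩ Set.Ioc a b)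
      = ENNReal.ofReal (II x l (k + 1) a - II x l (k + 1) b) := by
  have hset : volume ((cover x l k ∪ Set.Ico (x k) t)ᶜ ∩ Set.Ioc a b)
      = volume ((cover x l k)ᶜ ∩ Set.Ioc a b) := by
    apply vol_congr_pair (p := x k) (q := x k)
    · rintro w ⟨⟨hw1, hw2⟩, hw3⟩
      exfalso
      simp only [Set.mem_compl_iff, Set.mem_union, not_or] at hw1
      exact hw3 ⟨hw1.1, hw2⟩
    · rintro w ⟨⟨hw1, hw2⟩, hw3⟩
      simp only [Set.mem_compl_iff, Set.mem_union, not_or, Set.mem_inter_iff, not_and] at hw3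
      have hw4 : w ∈ Set.Ico (x k) t := by
        by_contra hc
        exact hw3 ⟨hw1, hc⟩ hw2
      have : w = x k := le_antisymm (le_trans hw2.2 hbX) hw4.1
      simp [this]
  rw [hset, hcov a b hab, claimA x l hl k (le_trans hab hbX), claimA x l hl k hbX]
  congr 1
  ring

lemma loc2 {a b : ℝ} (hXa : x k ≤ a) (hab : a ≤ b) (hbt : b ≤ t) :
    volume ((cover x l k ∪ Set.Ico (x k) t)ᶜ ∩ Set.Ioc a b)
      = ENNReal.ofReal (II x l (k + 1) a - II x l (k + 1) b) := by
  have hsub : (cover x l k ∪ Set.Ico (x k) t)ᶜ ∩ Set.Ioc a b ⊆ {t} := by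
    rintro w ⟨hw1, hw2⟩
    simp only [Set.mem_compl_iff, Set.mem_union, not_or] at hw1
    have h1 : x k ≤ w := le_trans hXa hw2.1.le
    have h2 : ¬ w < t := fun h => hw1.2 ⟨h1, h⟩
    have : w = t := le_antisymm (le_trans hw2.2 hbt) (not_lt.mp h2)
    exact Set.mem_singleton_iff.mpr this
  have h0 : volume ((cover x l k ∪ Set.Ico (x k) t)ᶜ ∩ Set.Ioc a b) = 0 :=
    measure_mono_null hsub ((Set.finite_singleton t).measure_zero _)
  rw [h0, claimB x l hl k t ht1 ht2 hXa (le_trans hab hbt),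
    claimB x l hl k t ht1 ht2 (le_trans hXa hab) hbt, sub_self]
  simp

lemma loc3 {a b : ℝ} (hta : t ≤ a) (hab : a ≤ b) :
    volume ((cover x l k ∪ Set.Ico (x k) t)ᶜ ∩ Set.Ioc a b)
      = ENNReal.ofReal (II x l (k + 1) a - II x l (k + 1) b) := by
  have hset : (cover x l k ∪ Set.Ico (x k) t)ᶜ ∩ Set.Ioc a b
      = (cover x l k)ᶜ ∩ Set.Ioc a b := by
    ext w
    simp only [Set.mem_inter_iff, Set.mem_compl_iff, Set.mem_union, not_or]
    constructor
    · rintro ⟨⟨h1, _⟩, h2⟩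
      exact ⟨h1, h2⟩
    · rintro ⟨h1, h2⟩
      refine ⟨⟨h1, ?_⟩, h2⟩
      rintro ⟨_, hwt⟩
      exact absurd hwt (not_lt.mpr (le_trans hta h2.1.le))
  rw [hset, hcov a b hab, claimC x l hl k t ht1 ht2 hta,
    claimC x l hl k t ht1 ht2 (le_trans hta hab)]
  congr 1
  ring

end LOC
end SP

namespace SP

theorem cover_main (x l : ℕ → ℝ) (hl : ∀ i, 0 < l i) : ∀ k : ℕ,
    (∀ z, z ∉ cover x l k ↔ Yn x l k z ≤ II x l k z) ∧
    (∀ a b, a ≤ b → volume ((cover x l k)ᶜ ∩ Set.Ioc a b)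
        = ENNReal.ofReal (II x l k a - II x l k b)) := by
  intro k
  induction k with
  | zero =>
    have hY : ∀ z : ℝ, Yn x l 0 z = -z := by intro z; simp [Yn]
    have hII : ∀ z : ℝ, II x l 0 z = -z := by
      intro z
      apply le_antisymm
      · have := II_le_self x l hl 0 z
        rwa [hY] at this
      · apply le_csInf (Yn_image_ne x l 0 z)
        rintro w ⟨y, hy, rfl⟩
        rw [hY]
        simp only [Set.mem_Iic] at hy
        linarith
    constructor
    · intro z
      simp [cover, hY, hII]
    · intro a b hab
      have hset : (cover x l 0)ᶜ ∩ Set.Ioc a b = Set.Ioc a b := by simp [cover]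
      rw [hset, Real.volume_Ioc, hII, hII]
      congr 1
      ring
  | succ k ih =>
    obtain ⟨ihM, ihV⟩ := ih
    have hvol_Ico : ∀ y, x k ≤ y → volume ((cover x l k)ᶜ ∩ Set.Ico (x k) y)
        = ENNReal.ofReal (II x l k (x k) - II x l k y) := by
      intro y hy
      rw [← ihV (x k) y hy]
      apply vol_congr_pair (p := x k) (q := y)
      · rintro w ⟨⟨hw1, hw2⟩, hw3⟩
        simp only [Set.mem_inter_iff, Set.mem_compl_iff, Set.mem_Ioc, not_and] at hw3
        have : ¬ (x k < w ∧ w ≤ y) := fun hc => hw3 hw1 hc.1 hc.2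
        have hw : w = x k := by
          rcases lt_or_eq_of_le hw2.1 with h | h
          · exact absurd ⟨h, hw2.2.le⟩ this
          · exact h.symm
        simp [hw]
      · rintro w ⟨⟨hw1, hw2⟩, hw3⟩
        simp only [Set.mem_inter_iff, Set.mem_compl_iff, Set.mem_Ico, not_and] at hw3
        have : ¬ (x k ≤ w ∧ w < y) := fun hc => hw3 hw1 hc.1 hc.2
        have hw : w = y := by
          rcases lt_or_eq_of_le hw2.2 with h | h
          · exact absurd ⟨hw2.1.le, h⟩ this
          · exact h
        simp [hw]
    have hset_eq : {y : ℝ | x k ≤ y ∧ volume ((cover x l k)ᶜ ∩ Set.Ico (x k) y)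
          = ENNReal.ofReal (l k)}
        = {y : ℝ | x k ≤ y ∧ II x l k y = II x l k (x k) - l k} := by
      ext y
      simp only [Set.mem_setOf_eq]
      constructor
      · rintro ⟨h1, h2⟩
        refine ⟨h1, ?_⟩
        rw [hvol_Ico y h1] at h2
        have hnn : 0 ≤ II x l k (x k) - II x l k y :=
          sub_nonneg.mpr (II_anti x l hl k h1)
        have := (ENNReal.ofReal_eq_ofReal_iff hnn (hl k).le).mp h2
        linarith
      · rintro ⟨h1, h2⟩
        refine ⟨h1, ?_⟩
        rw [hvol_Ico y h1, h2]
        congr 1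
        ring
    have hSum0 : 0 ≤ ∑ i ∈ Finset.range k, l i := Finset.sum_nonneg fun i _ => (hl i).le
    obtain ⟨v, ⟨w, hw, rfl⟩, hv⟩ : ∃ v ∈ Yn x l k '' Set.Iic (x k), v < II x l k (x k) + 1 :=
      exists_lt_of_csInf_lt (Yn_image_ne x l k (x k)) (lt_add_one _)
    simp only [Set.mem_Iic] at hw
    have hXM : x k ≤ x k + (∑ i ∈ Finset.range k, l i) + l k + 1 := by linarith [(hl k)]
    have hIM : II x l k (x k + (∑ i ∈ Finset.range k, l i) + l k + 1) ≤ II x l k (x k) - l k := by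
      set M := x k + (∑ i ∈ Finset.range k, l i) + l k + 1 with hM
      have h1 := II_le_self x l hl k M
      have h2 := Yn_shift x l k (show w ≤ M by linarith)
      have h3 : (∑ i ∈ Finset.range k, if w < x i ∧ x i ≤ M then l i else 0)
          ≤ ∑ i ∈ Finset.range k, l i := sum_ind_le l hl k _
      have h4 : M - w ≥ M - x k := by linarith
      have h5 : M - x k = (∑ i ∈ Finset.range k, l i) + l k + 1 := by rw [hM]; ring
      linarith
    obtain ⟨y0, hy0, hy0v⟩ :=
      intermediate_value_Icc' hXM (II_cont x l hl k).continuousOn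
        ⟨hIM, by linarith [(hl k)]⟩
    have hS0ne : {y : ℝ | x k ≤ y ∧ II x l k y = II x l k (x k) - l k}.Nonempty :=
      ⟨y0, hy0.1, hy0v⟩
    have hS0cl : IsClosed {y : ℝ | x k ≤ y ∧ II x l k y = II x l k (x k) - l k} := by
      have : {y : ℝ | x k ≤ y ∧ II x l k y = II x l k (x k) - l k}
          = Set.Ici (x k) ∩ II x l k ⁻¹' {II x l k (x k) - l k} := by
        ext y
        simp [Set.mem_setOf_eq, Set.mem_preimage]
      rw [this]
      exact isClosed_Ici.inter (isClosed_singleton.preimage (II_cont x l hl k))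
    have hS0bdd : BddBelow {y : ℝ | x k ≤ y ∧ II x l k y = II x l k (x k) - l k} :=
      ⟨x k, fun y hy => hy.1⟩
    obtain ⟨ht1, ht2⟩ := hS0cl.csInf_mem hS0ne hS0bdd
    set t := sInf {y : ℝ | x k ≤ y ∧ II x l k y = II x l k (x k) - l k} with hT
    have hmin : ∀ y, x k ≤ y → y < t → II x l k (x k) - l k < II x l k y := by
      intro y h1 h2
      have h3 : II x l k t ≤ II x l k y := II_anti x l hl k h2.le
      rcases eq_or_lt_of_le h3 with h4 | h4
      · exfalso
        have : y ∈ {y : ℝ | x k ≤ y ∧ II x l k y = II x l k (x k) - l k} :=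
          ⟨h1, by rw [← h4, ht2]⟩
        exact absurd (csInf_le hS0bdd this) (not_le.mpr h2)
      · rw [ht2] at h4
        exact h4
    have hcov1 : cover x l (k + 1) = cover x l k ∪ Set.Ico (x k) t := by
      show cover x l (k + 1) = _
      rw [hT]
      simp only [cover, hset_eq]
    have hF' : MeasurableSet ((cover x l k ∪ Set.Ico (x k) t)ᶜ) :=
      ((cover_measurable x l k).union measurableSet_Ico).compl
    have hnn : ∀ u v : ℝ, u ≤ v → 0 ≤ II x l (k + 1) u - II x l (k + 1) v :=
      fun u v huv => sub_nonneg.mpr (II_anti x l hl (k + 1) huv)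
    constructor
    · intro z
      rw [hcov1, claimM x l hl k t ht1 ht2 hmin z, ← ihM z]
      simp only [Set.mem_union, not_or, Set.mem_compl_iff]
    · intro a b hab
      rw [hcov1]
      rcases le_total b (x k) with h1 | h1
      · exact loc1 x l hl k t ht1 ht2 ihV hab h1
      · rcases le_total t a with h2 | h2
        · exact loc3 x l hl k t ht1 ht2 ihV h2 hab
        · rcases le_total a (x k) with h3 | h3
          · rcases le_total b t with h4 | h4
            · rw [vol_split _ hF' h3 h1,
                loc1 x l hl k t ht1 ht2 ihV h3 le_rfl,
                loc2 x l hl k t ht1 ht2 ihV le_rfl h1 h4,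
                ← ENNReal.ofReal_add (hnn _ _ h3) (hnn _ _ h1)]
              congr 1
              ring
            · rw [vol_split _ hF' h3 (le_trans ht1 h4),
                vol_split _ hF' ht1 h4,
                loc1 x l hl k t ht1 ht2 ihV h3 le_rfl,
                loc2 x l hl k t ht1 ht2 ihV le_rfl ht1 le_rfl,
                loc3 x l hl k t ht1 ht2 ihV le_rfl h4,
                ← ENNReal.ofReal_add (hnn _ _ ht1) (hnn _ _ h4),
                show II x l (k + 1) (x k) - II x l (k + 1) t
                    + (II x l (k + 1) t - II x l (k + 1) b)
                    = II x l (k + 1) (x k) - II x l (k + 1) b from by ring,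
                ← ENNReal.ofReal_add (hnn _ _ h3) (hnn _ _ h1)]
              congr 1
              ring
          · rcases le_total b t with h4 | h4
            · exact loc2 x l hl k t ht1 ht2 ihV h3 hab h4
            · rw [vol_split _ hF' h2 h4,
                loc2 x l hl k t ht1 ht2 ihV h3 h2 le_rfl,
                loc3 x l hl k t ht1 ht2 ihV le_rfl h4,
                ← ENNReal.ofReal_add (hnn _ _ h2) (hnn _ _ h4)]
              congr 1
              ring

end SP

namespace SP

lemma cover_subset_Ici (x l : ℕ → ℝ) (k : ℕ) (m : ℝ) (hm : ∀ i, i < k → m ≤ x i) :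
    cover x l k ⊆ Set.Ici m := by
  induction k with
  | zero =>
    intro w hw
    simp [cover] at hw
  | succ k ih =>
    have hck : cover x l (k + 1) = cover x l k ∪ Set.Ico (x k) _ := rfl
    rw [hck]
    apply Set.union_subset
    · exact ih (fun i hi => hm i (Nat.lt_succ_of_lt hi))
    · intro w hw
      exact le_trans (hm k (Nat.lt_succ_self k)) hw.1

end SP


/-- For every `z ∈ ℝ`, `R^(n)_z = Y^(n)_z - I^(n)_z`, where
`I^(n)_z = inf{ Y^(n)_y : y ≤ z }`. -/
theorem quantity_of_data_eq_Y_sub_inf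
    (x l : ℕ → ℝ) (n : ℕ) (hn : 1 ≤ n) (hl : ∀ i, 0 < l i) (z : ℝ) :
    Rq x l n z = Yn x l n z - sInf (Yn x l n '' Set.Iic z) := by
  obtain ⟨hM, hV⟩ := SP.cover_main x l hl n
  set g := gpt ((cover x l n)ᶜ) z with hgdef
  have hgS : g = sSup {y : ℝ | y ≤ z ∧ y ∈ (cover x l n)ᶜ} := rfl
  -- T is nonempty
  obtain ⟨j, hj, hminx⟩ := Finset.exists_min_image (Finset.range n) x
    ⟨0, Finset.mem_range.mpr hn⟩
  have hy0 : min z (x j - 1) ∈ {y : ℝ | y ≤ z ∧ y ∈ (cover x l n)ᶜ} := by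
    refine ⟨min_le_left _ _, ?_⟩
    intro hc
    have := SP.cover_subset_Ici x l n (x j)
      (fun i hi => hminx i (Finset.mem_range.mpr hi)) hc
    have h2 : min z (x j - 1) ≤ x j - 1 := min_le_right _ _
    simp only [Set.mem_Ici] at this
    linarith
  have hTne : {y : ℝ | y ≤ z ∧ y ∈ (cover x l n)ᶜ}.Nonempty := ⟨_, hy0⟩
  have hTbdd : BddAbove {y : ℝ | y ≤ z ∧ y ∈ (cover x l n)ᶜ} := ⟨z, fun y hy => hy.1⟩
  have hgz : g ≤ z := by
    rw [hgS]
    exact csSup_le hTne (fun y hy => hy.1)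
  -- jump-free gap below g
  obtain ⟨δ, hδ0, hδ⟩ : ∃ δ : ℝ, 0 < δ ∧ ∀ i, i < n → ¬ (g - δ ≤ x i ∧ x i < g) := by
    rcases ((Finset.range n).filter (fun i => x i < g)).eq_empty_or_nonempty with he | hne
    · refine ⟨1, one_pos, fun i hi hc => ?_⟩
      have : i ∈ (Finset.range n).filter (fun i => x i < g) :=
        Finset.mem_filter.mpr ⟨Finset.mem_range.mpr hi, hc.2⟩
      rw [he] at this
      exact absurd this (Finset.notMem_empty i)
    · obtain ⟨b, hb, hmax⟩ := Finset.exists_max_image _ (fun i => x i) hne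
      have hbg : x b < g := (Finset.mem_filter.mp hb).2
      refine ⟨(g - x b) / 2, by linarith, ?_⟩
      rintro i hi ⟨hc1, hc2⟩
      have hbi : x i ≤ x b :=
        hmax i (Finset.mem_filter.mpr ⟨Finset.mem_range.mpr hi, hc2⟩)
      linarith
  set J := ∑ i ∈ Finset.range n, if x i = g then l i else 0 with hJ
  have hJ0 : 0 ≤ J := SP.sum_ind_nonneg l hl n _
  have hYw : ∀ w, g - δ ≤ w → w < g → Yn x l n w = Yn x l n g - J + (g - w) := by
    intro w h1 h2
    have hshift := SP.Yn_shift x l n h2.le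
    have hsum : (∑ i ∈ Finset.range n, if w < x i ∧ x i ≤ g then l i else 0) = J := by
      rw [hJ]
      apply Finset.sum_congr rfl
      intro i hi
      simp only [Finset.mem_range] at hi
      by_cases hx : x i = g
      · rw [if_pos ⟨by rw [hx]; exact h2, le_of_eq hx⟩, if_pos hx]
      · by_cases hx2 : w < x i ∧ x i ≤ g
        · exfalso
          exact hδ i hi ⟨by linarith [hx2.1], lt_of_le_of_ne hx2.2 hx⟩
        · rw [if_neg hx2, if_neg hx]
    rw [hsum] at hshift
    linarith
  -- claim 2a : II g ≤ Yn g - J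
  have h2a : SP.II x l n g ≤ Yn x l n g - J := by
    apply le_of_forall_pos_le_add
    intro ε hε
    have hw1 : g - δ ≤ g - min δ ε := by
      have := min_le_left δ ε
      linarith
    have hw2 : g - min δ ε < g := by
      have := lt_min hδ0 hε
      linarith
    have hle := SP.II_le x l hl n (show g - min δ ε ≤ g by linarith)
    rw [hYw _ hw1 hw2] at hle
    have := min_le_right δ ε
    linarith
  -- claim 2b : Yn g - J ≤ II g
  have h2b : Yn x l n g - J ≤ SP.II x l n g := by
    by_cases hgT : g ∈ {y : ℝ | y ≤ z ∧ y ∈ (cover x l n)ᶜ}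
    · have hfree : Yn x l n g ≤ SP.II x l n g := (hM g).mp hgT.2
      have hJle : J ≤ 0 := by linarith
      linarith
    · obtain ⟨w, hwT, hw⟩ := exists_lt_of_lt_csSup hTne
        (show g - δ < sSup {y : ℝ | y ≤ z ∧ y ∈ (cover x l n)ᶜ} by rw [← hgS]; linarith)
      have hwle : w ≤ g := by
        rw [hgS]
        exact le_csSup hTbdd hwT
      have hwlt : w < g := lt_of_le_of_ne hwle (fun h => hgT (h ▸ hwT))
      have hfree : Yn x l n w ≤ SP.II x l n w := (hM w).mp hwT.2
      have hIw : SP.II x l n w ≤ Yn x l n w := SP.II_le_self x l hl n w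
      have hIlip : SP.II x l n w - (g - w) ≤ SP.II x l n g := SP.II_lip x l hl n hwle
      rw [hYw w hw.le hwlt] at hfree
      linarith
  -- II g = II z
  have hIg : SP.II x l n g = SP.II x l n z := by
    have hempty : (cover x l n)ᶜ ∩ Set.Ioc g z = ∅ := by
      ext w
      simp only [Set.mem_inter_iff, Set.mem_compl_iff, Set.mem_Ioc,
        Set.mem_empty_iff_false, iff_false, not_and]
      intro h1 h2 h3
      have hwT : w ∈ {y : ℝ | y ≤ z ∧ y ∈ (cover x l n)ᶜ} := ⟨h3, h1⟩
      have := le_csSup hTbdd hwT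
      rw [← hgS] at this
      linarith
    have hVz := hV g z hgz
    rw [hempty] at hVz
    simp only [measure_empty] at hVz
    have h0 : SP.II x l n g - SP.II x l n z ≤ 0 := ENNReal.ofReal_eq_zero.mp hVz.symm
    have h1 : SP.II x l n z ≤ SP.II x l n g := SP.II_anti x l hl n hgz
    linarith
  -- sum split
  have hsplit : (∑ i ∈ Finset.range n, if g ≤ x i ∧ x i ≤ z then l i else 0)
      = (∑ i ∈ Finset.range n, if g < x i ∧ x i ≤ z then l i else 0) + J := by
    rw [hJ, ← Finset.sum_add_distrib]
    apply Finset.sum_congr rfl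
    intro i _
    by_cases h1 : x i = g
    · rw [if_pos ⟨le_of_eq h1.symm, by rw [h1]; exact hgz⟩,
        if_neg (by rintro ⟨hlt, -⟩; rw [h1] at hlt; exact lt_irrefl g hlt), if_pos h1]
      ring
    · by_cases h2 : g ≤ x i ∧ x i ≤ z
      · rw [if_pos h2, if_pos ⟨lt_of_le_of_ne h2.1 (Ne.symm h1), h2.2⟩, if_neg h1]
        ring
      · rw [if_neg h2, if_neg (fun hc => h2 ⟨hc.1.le, hc.2⟩), if_neg h1]
        ring
  have hshift := SP.Yn_shift x l n hgz
  have hIIz : sInf (Yn x l n '' Set.Iic z) = SP.II x l n z := rfl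
  unfold Rq
  rw [← hgdef, hIIz]
  linarith
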